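/- Let p₁, p₂, p₃ be real numbers with |pₖ| ≤ 1 for k = 1, 2, 3 and p₁² + p₂² + p₃² ≤ 1 + 2·p₁·p₂·p₃. Then the map Φ_p satisfies the Kadison–Schwarz inequality: Φ_p(X Xᴴ) − Φ_p(X) Φ_p(Xᴴ) is positive semidefinite for every X ∈ M₂(ℂ). -/

import Mathlib

open Matrix
open scoped ComplexOrder

/-- The three Pauli matrices in `M₂(ℂ)`. -/
def pauli : Fin 3 → Matrix (Fin 2) (Fin 2) ℂ
  | 0 => !![0, 1; 1, 0]
  | 1 => !![0, -Complex.I; Complex.I, 0]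
  | 2 => !![1, 0; 0, -1]

/-- The unital linear map `Φ_p` with `Φ_p(I) = I` and `Φ_p(σₖ) = pₖ σₖ`, given by
`Φ_p(X) = ½ Tr(X) I + ½ Σₖ pₖ Tr(σₖ X) σₖ`. -/
noncomputable def PhiP (p : Fin 3 → ℝ) (X : Matrix (Fin 2) (Fin 2) ℂ) :
    Matrix (Fin 2) (Fin 2) ℂ :=
  (1 / 2 : ℂ) • (X.trace • (1 : Matrix (Fin 2) (Fin 2) ℂ)
    + ∑ k, ((p k : ℂ) * (pauli k * X).trace) • pauli k)

set_option maxHeartbeats 2000000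

lemma phiP_apply (p : Fin 3 → ℝ) (Y : Matrix (Fin 2) (Fin 2) ℂ) :
    PhiP p Y = !![(((1 + p 2)/2 : ℝ) : ℂ) * Y 0 0 + (((1 - p 2)/2 : ℝ) : ℂ) * Y 1 1,
                  (((p 0 + p 1)/2 : ℝ) : ℂ) * Y 0 1 + (((p 0 - p 1)/2 : ℝ) : ℂ) * Y 1 0;
                  (((p 0 - p 1)/2 : ℝ) : ℂ) * Y 0 1 + (((p 0 + p 1)/2 : ℝ) : ℂ) * Y 1 0,
                  (((1 - p 2)/2 : ℝ) : ℂ) * Y 0 0 + (((1 + p 2)/2 : ℝ) : ℂ) * Y 1 1] := by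
  ext i j
  fin_cases i <;> fin_cases j <;>
    simp [PhiP, pauli, Matrix.trace, Fin.sum_univ_succ, Matrix.mul_apply, Matrix.one_apply] <;>
    (push_cast; first | ring1 | (ring_nf; simp [Complex.I_sq]; ring_nf))

lemma phiP_conjTranspose (p : Fin 3 → ℝ) (Y : Matrix (Fin 2) (Fin 2) ℂ) :
    PhiP p Yᴴ = (PhiP p Y)ᴴ := by
  rw [phiP_apply, phiP_apply]
  ext i j
  fin_cases i <;> fin_cases j <;>
    simp [Matrix.conjTranspose_apply, map_add, _root_.map_mul, Complex.conj_ofReal] <;> ring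

lemma hermMain (p : Fin 3 → ℝ) (X : Matrix (Fin 2) (Fin 2) ℂ) :
    (PhiP p (X * Xᴴ) - PhiP p X * PhiP p Xᴴ).IsHermitian := by
  have hX : (X * Xᴴ).IsHermitian := isHermitian_mul_conjTranspose_self X
  have hphi : (PhiP p (X * Xᴴ)).IsHermitian := by
    show _ = _
    rw [← phiP_conjTranspose, hX.eq]
  have hb : (PhiP p X * PhiP p Xᴴ).IsHermitian := by
    rw [phiP_conjTranspose p X]
    exact isHermitian_mul_conjTranspose_self _
  exact hphi.sub hb

lemma psd2 (M : Matrix (Fin 2) (Fin 2) ℂ) (hH : M.IsHermitian)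
    (h00 : 0 ≤ (M 0 0).re) (h11 : 0 ≤ (M 1 1).re)
    (hdet : Complex.normSq (M 0 1) ≤ (M 0 0).re * (M 1 1).re) :
    M.PosSemidef := by
  refine .of_dotProduct_mulVec_nonneg hH fun x => ?_
  have h10 : M 1 0 = starRingEnd ℂ (M 0 1) := by
    have := congrFun (congrFun hH.symm 1) 0
    simpa [Matrix.conjTranspose_apply] using this
  have h00' : (M 0 0).im = 0 := by
    have := congrFun (congrFun hH.symm 0) 0
    simp [Matrix.conjTranspose_apply, Complex.ext_iff] at this
    linarith [this]
  have h11' : (M 1 1).im = 0 := by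
    have := congrFun (congrFun hH.symm 1) 1
    simp [Matrix.conjTranspose_apply, Complex.ext_iff] at this
    linarith [this]
  have hdot : star x ⬝ᵥ M.mulVec x =
      (starRingEnd ℂ (x 0)) * (M 0 0 * x 0 + M 0 1 * x 1)
      + (starRingEnd ℂ (x 1)) * (M 1 0 * x 0 + M 1 1 * x 1) := by
    simp [dotProduct, Matrix.mulVec, Fin.sum_univ_succ]
    try ring
  rw [hdot, Complex.le_def]
  have hns : Complex.normSq (M 0 1) = (M 0 1).re^2 + (M 0 1).im^2 := by
    simp [Complex.normSq_apply]; ring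
  rw [hns] at hdet
  constructor
  · simp only [h10, Complex.add_re, Complex.mul_re, Complex.mul_im, Complex.conj_re,
      Complex.conj_im, Complex.add_im, Complex.zero_re]
    set a := (M 0 0).re; set br := (M 0 1).re; set bi := (M 0 1).im; set d := (M 1 1).re
    set u := (x 0).re; set v := (x 0).im; set w := (x 1).re; set z := (x 1).im
    simp only [h00', h11']
    have hsum1 : (0:ℝ) ≤ u^2+v^2 := by positivity
    have hsum2 : (0:ℝ) ≤ w^2+z^2 := by positivity
    rcases eq_or_lt_of_le h00 with hA | hA
    · have hz : br^2 + bi^2 ≤ 0 := by nlinarith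
      have hbr : br = 0 := by nlinarith [sq_nonneg br, sq_nonneg bi]
      have hbi : bi = 0 := by nlinarith [sq_nonneg br, sq_nonneg bi]
      rw [hbr, hbi, ← hA]
      nlinarith [mul_nonneg h11 hsum2]
    · nlinarith [sq_nonneg (a*u + br*w - bi*z), sq_nonneg (a*v + br*z + bi*w),
        mul_nonneg (sub_nonneg.2 hdet) hsum2, hA, h11]
  · simp only [h10, Complex.add_im, Complex.mul_re, Complex.mul_im, Complex.conj_re,
      Complex.conj_im, Complex.add_re, h00', h11', Complex.zero_im]
    ring

lemma sq_le_of_K (A Bq S T : ℝ) (hA : 0 ≤ A) (hB : 0 ≤ Bq) (hAB : A + Bq = 1)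
    (hS : S^2 ≤ 1) (hK : Bq*S^2 + A*T^2 ≤ A*Bq) : S^2 ≤ A := by
  nlinarith [mul_nonneg hA (sq_nonneg T), sq_nonneg (S^2 - A), mul_nonneg hB (sq_nonneg S)]

lemma r_nonneg (u v w nb nc rho : ℝ) (hu : 0 ≤ u) (hv : 0 ≤ v) (hw : w^2 ≤ u*v)
    (hnb : 0 ≤ nb) (hnc : 0 ≤ nc) (hrho : rho^2 ≤ nb*nc) :
    0 ≤ u*nb + v*nc - 2*w*rho := by
  nlinarith [sq_nonneg (u*nb - v*nc), mul_le_mul hw hrho (sq_nonneg rho) (mul_nonneg hu hv),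
    mul_nonneg hu hnb, mul_nonneg hv hnc, sq_nonneg (u*nb + v*nc - 2*w*rho)]

lemma amgm (x y s : ℝ) (hx : 0 ≤ x) (hy : 0 ≤ y) (hs : 0 ≤ s) (h : s^2 ≤ x*y) :
    2*s ≤ x + y := by
  nlinarith [sq_nonneg (x - y), sq_nonneg (x + y - 2*s)]

lemma final_real (A Bq S T g2 nb nc rho m n : ℝ)
    (hA : 0 ≤ A) (hB : 0 ≤ Bq) (hAB : A + Bq = 1) (hS : S^2 ≤ 1) (hT : T^2 ≤ 1)
    (hK : Bq*S^2 + A*T^2 ≤ A*Bq)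
    (hg2 : 0 ≤ g2) (hnb : 0 ≤ nb) (hnc : 0 ≤ nc) (hrho : rho^2 ≤ nb*nc)
    (hm : 0 ≤ m) (hn : 0 ≤ n)
    (hm2 : m^2 = (S*Bq)^2*nc + (T*A)^2*nb - 2*((S*Bq)*(T*A))*rho)
    (hn2 : n^2 = (T*A)^2*nc + (S*Bq)^2*nb - 2*((S*Bq)*(T*A))*rho) :
    g2*(m+n)^2 ≤ (A*Bq*g2 + ((A-S^2)*nb + (Bq-T^2)*nc - 2*(S*T)*rho))
               * (A*Bq*g2 + ((Bq-T^2)*nb + (A-S^2)*nc - 2*(S*T)*rho)) := by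
  have hAS : S^2 ≤ A := sq_le_of_K A Bq S T hA hB hAB hS hK
  have hBT : T^2 ≤ Bq := sq_le_of_K Bq A T S hB hA (by linarith) hT (by nlinarith)
  have hw2 : (S*T)^2 ≤ (A - S^2)*(Bq - T^2) := by nlinarith
  obtain ⟨r00, hr00def⟩ : ∃ r, r = (A-S^2)*nb + (Bq-T^2)*nc - 2*(S*T)*rho := ⟨_, rfl⟩
  obtain ⟨r11, hr11def⟩ : ∃ r, r = (Bq-T^2)*nb + (A-S^2)*nc - 2*(S*T)*rho := ⟨_, rfl⟩
  rw [← hr00def, ← hr11def]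
  have hr00 : 0 ≤ r00 := by
    rw [hr00def]
    exact r_nonneg (A-S^2) (Bq-T^2) (S*T) nb nc rho (by linarith) (by linarith) hw2 hnb hnc hrho
  have hr11 : 0 ≤ r11 := by
    rw [hr11def]
    exact r_nonneg (Bq-T^2) (A-S^2) (S*T) nb nc rho (by linarith) (by linarith)
      (by nlinarith) hnb hnc hrho
  have hK' : 0 ≤ A*Bq - Bq*S^2 - A*T^2 := by linarith
  have hm2' : m^2 ≤ A*Bq*r00 := by
    have e : A*Bq*r00 - m^2
        = (A*Bq - Bq*S^2 - A*T^2)*(A*nb) + (A*Bq - Bq*S^2 - A*T^2)*(Bq*nc) := by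
      rw [hr00def, hm2]; ring
    have p1 : 0 ≤ (A*Bq - Bq*S^2 - A*T^2)*(A*nb) := mul_nonneg hK' (mul_nonneg hA hnb)
    have p2 : 0 ≤ (A*Bq - Bq*S^2 - A*T^2)*(Bq*nc) := mul_nonneg hK' (mul_nonneg hB hnc)
    linarith
  have hn2' : n^2 ≤ A*Bq*r11 := by
    have e : A*Bq*r11 - n^2
        = (A*Bq - Bq*S^2 - A*T^2)*(Bq*nb) + (A*Bq - Bq*S^2 - A*T^2)*(A*nc) := by
      rw [hr11def, hn2]; ring
    have p1 : 0 ≤ (A*Bq - Bq*S^2 - A*T^2)*(Bq*nb) := mul_nonneg hK' (mul_nonneg hB hnb)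
    have p2 : 0 ≤ (A*Bq - Bq*S^2 - A*T^2)*(A*nc) := mul_nonneg hK' (mul_nonneg hA hnc)
    linarith
  have hAB0 : 0 ≤ A*Bq := mul_nonneg hA hB
  have hx' : 0 ≤ A*Bq*g2 := mul_nonneg hAB0 hg2
  have k1 : (m*n)^2 ≤ (A*Bq*r00)*(A*Bq*r11) := by
    have h := mul_le_mul hm2' hn2' (sq_nonneg n) (by positivity)
    have e : (m*n)^2 = m^2*n^2 := by ring
    rw [e]; exact h
  have k1g : (g2*(m*n))^2 ≤ (A*Bq*g2)^2 * (r00*r11) := by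
    have h := mul_le_mul_of_nonneg_left k1 (sq_nonneg g2)
    have e1 : (g2*(m*n))^2 = g2^2*(m*n)^2 := by ring
    have e2 : (A*Bq*g2)^2 * (r00*r11) = g2^2*((A*Bq*r00)*(A*Bq*r11)) := by ring
    rw [e1, e2]; exact h
  have k2 : 2*(g2*(m*n)) ≤ (A*Bq*g2)^2 + r00*r11 :=
    amgm _ _ _ (sq_nonneg _) (mul_nonneg hr00 hr11)
      (mul_nonneg hg2 (mul_nonneg hm hn)) k1g
  have l1 : g2*m^2 ≤ g2*(A*Bq*r00) := mul_le_mul_of_nonneg_left hm2' hg2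
  have l2 : g2*n^2 ≤ g2*(A*Bq*r11) := mul_le_mul_of_nonneg_left hn2' hg2
  have l3 : 0 ≤ r00 * r11 := mul_nonneg hr00 hr11
  nlinarith [l1, l2, k2, l3, mul_nonneg hx' hr00, mul_nonneg hx' hr11]

set_option maxHeartbeats 8000000 in
/-- if `|pₖ| ≤ 1` and `p₁² + p₂² + p₃² ≤ 1 + 2 p₁ p₂ p₃`, then `Φ_p`
satisfies the Kadison–Schwarz inequality. -/
theorem stmt_4 (p : Fin 3 → ℝ) (h1 : ∀ k, |p k| ≤ 1)
    (h2 : p 0 ^ 2 + p 1 ^ 2 + p 2 ^ 2 ≤ 1 + 2 * p 0 * p 1 * p 2) :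
    ∀ X : Matrix (Fin 2) (Fin 2) ℂ,
      (PhiP p (X * Xᴴ) - PhiP p X * PhiP p Xᴴ).PosSemidef := by
  intro X
  have hp0 := abs_le.mp (h1 0)
  have hp1 := abs_le.mp (h1 1)
  have hp2 := abs_le.mp (h1 2)
  -- real quantities
  have hA : (0:ℝ) ≤ (1+p 2)/2 := by linarith [hp2.1]
  have hB : (0:ℝ) ≤ (1-p 2)/2 := by linarith [hp2.2]
  have hAB : (1+p 2)/2 + (1-p 2)/2 = 1 := by ring
  have hS : ((p 0+p 1)/2)^2 ≤ 1 := by nlinarith [hp0.1, hp0.2, hp1.1, hp1.2]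
  have hT : ((p 0-p 1)/2)^2 ≤ 1 := by nlinarith [hp0.1, hp0.2, hp1.1, hp1.2]
  have hK : ((1-p 2)/2)*((p 0+p 1)/2)^2 + ((1+p 2)/2)*((p 0-p 1)/2)^2
      ≤ ((1+p 2)/2)*((1-p 2)/2) := by nlinarith [h2]
  have hg2 : (0:ℝ) ≤ ((X 0 0).re - (X 1 1).re)^2 + ((X 0 0).im - (X 1 1).im)^2 := by positivity
  have hnb : (0:ℝ) ≤ (X 0 1).re^2 + (X 0 1).im^2 := by positivity
  have hnc : (0:ℝ) ≤ (X 1 0).re^2 + (X 1 0).im^2 := by positivity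
  have hrho : ((X 0 1).re*(X 1 0).re + (X 0 1).im*(X 1 0).im)^2
      ≤ ((X 0 1).re^2 + (X 0 1).im^2) * ((X 1 0).re^2 + (X 1 0).im^2) := by
    nlinarith [sq_nonneg ((X 0 1).re*(X 1 0).im - (X 0 1).im*(X 1 0).re)]
  have hAS : ((p 0+p 1)/2)^2 ≤ (1+p 2)/2 :=
    sq_le_of_K _ ((1-p 2)/2) _ ((p 0-p 1)/2) hA hB hAB hS hK
  have hBT : ((p 0-p 1)/2)^2 ≤ (1-p 2)/2 :=
    sq_le_of_K _ ((1+p 2)/2) _ ((p 0+p 1)/2) hB hA (by linarith) hT (by linarith [hK])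
  have hw2 : (((p 0+p 1)/2)*((p 0-p 1)/2))^2
      ≤ ((1+p 2)/2 - ((p 0+p 1)/2)^2)*((1-p 2)/2 - ((p 0-p 1)/2)^2) := by nlinarith
  -- entries
  have hre00 : ((PhiP p (X * Xᴴ) - PhiP p X * PhiP p Xᴴ) 0 0).re =
      ((1+p 2)/2)*((1-p 2)/2)*(((X 0 0).re - (X 1 1).re)^2 + ((X 0 0).im - (X 1 1).im)^2)
      + (((1+p 2)/2 - ((p 0+p 1)/2)^2)*((X 0 1).re^2 + (X 0 1).im^2)
        + ((1-p 2)/2 - ((p 0-p 1)/2)^2)*((X 1 0).re^2 + (X 1 0).im^2)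
        - 2*(((p 0+p 1)/2)*((p 0-p 1)/2))*((X 0 1).re*(X 1 0).re + (X 0 1).im*(X 1 0).im)) := by
    simp [Matrix.sub_apply, phiP_apply, Matrix.mul_apply, Matrix.conjTranspose_apply,
      Fin.sum_univ_succ, Complex.add_re, Complex.sub_re, Complex.mul_re, Complex.mul_im,
      Complex.add_im, Complex.sub_im, Complex.ofReal_re, Complex.ofReal_im]
    ring
  have hre11 : ((PhiP p (X * Xᴴ) - PhiP p X * PhiP p Xᴴ) 1 1).re =
      ((1+p 2)/2)*((1-p 2)/2)*(((X 0 0).re - (X 1 1).re)^2 + ((X 0 0).im - (X 1 1).im)^2)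
      + (((1-p 2)/2 - ((p 0-p 1)/2)^2)*((X 0 1).re^2 + (X 0 1).im^2)
        + ((1+p 2)/2 - ((p 0+p 1)/2)^2)*((X 1 0).re^2 + (X 1 0).im^2)
        - 2*(((p 0+p 1)/2)*((p 0-p 1)/2))*((X 0 1).re*(X 1 0).re + (X 0 1).im*(X 1 0).im)) := by
    simp [Matrix.sub_apply, phiP_apply, Matrix.mul_apply, Matrix.conjTranspose_apply,
      Fin.sum_univ_succ, Complex.add_re, Complex.sub_re, Complex.mul_re, Complex.mul_im,
      Complex.add_im, Complex.sub_im, Complex.ofReal_re, Complex.ofReal_im]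
    ring
  have hm01 : (PhiP p (X * Xᴴ) - PhiP p X * PhiP p Xᴴ) 0 1 =
      (X 0 0 - X 1 1) * (((((p 0+p 1)/2)*((1-p 2)/2) : ℝ) : ℂ) * starRingEnd ℂ (X 1 0)
          - ((((p 0-p 1)/2)*((1+p 2)/2) : ℝ) : ℂ) * starRingEnd ℂ (X 0 1))
      + starRingEnd ℂ (X 0 0 - X 1 1) * (((((p 0-p 1)/2)*((1+p 2)/2) : ℝ) : ℂ) * (X 1 0)
          - ((((p 0+p 1)/2)*((1-p 2)/2) : ℝ) : ℂ) * (X 0 1)) := by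
    simp [Matrix.sub_apply, phiP_apply, Matrix.mul_apply, Matrix.conjTranspose_apply,
      Fin.sum_univ_succ, Complex.star_def, map_sub]
    push_cast
    ring
  -- the two off-diagonal factors
  have hm2eq : (‖((((p 0+p 1)/2)*((1-p 2)/2) : ℝ) : ℂ) * starRingEnd ℂ (X 1 0)
          - ((((p 0-p 1)/2)*((1+p 2)/2) : ℝ) : ℂ) * starRingEnd ℂ (X 0 1)‖)^2
      = (((p 0+p 1)/2)*((1-p 2)/2))^2 * ((X 1 0).re^2 + (X 1 0).im^2)
        + (((p 0-p 1)/2)*((1+p 2)/2))^2 * ((X 0 1).re^2 + (X 0 1).im^2)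
        - 2*((((p 0+p 1)/2)*((1-p 2)/2))*(((p 0-p 1)/2)*((1+p 2)/2)))
            *((X 0 1).re*(X 1 0).re + (X 0 1).im*(X 1 0).im) := by
    rw [Complex.sq_norm]
    simp [Complex.normSq_apply, Complex.sub_re, Complex.sub_im, Complex.mul_re, Complex.mul_im]
    ring
  have hn2eq : (‖((((p 0-p 1)/2)*((1+p 2)/2) : ℝ) : ℂ) * (X 1 0)
          - ((((p 0+p 1)/2)*((1-p 2)/2) : ℝ) : ℂ) * (X 0 1)‖)^2
      = (((p 0-p 1)/2)*((1+p 2)/2))^2 * ((X 1 0).re^2 + (X 1 0).im^2)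
        + (((p 0+p 1)/2)*((1-p 2)/2))^2 * ((X 0 1).re^2 + (X 0 1).im^2)
        - 2*((((p 0+p 1)/2)*((1-p 2)/2))*(((p 0-p 1)/2)*((1+p 2)/2)))
            *((X 0 1).re*(X 1 0).re + (X 0 1).im*(X 1 0).im) := by
    rw [Complex.sq_norm]
    simp [Complex.normSq_apply, Complex.sub_re, Complex.sub_im, Complex.mul_re, Complex.mul_im]
    ring
  have key := final_real ((1+p 2)/2) ((1-p 2)/2) ((p 0+p 1)/2) ((p 0-p 1)/2)
      (((X 0 0).re - (X 1 1).re)^2 + ((X 0 0).im - (X 1 1).im)^2)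
      ((X 0 1).re^2 + (X 0 1).im^2) ((X 1 0).re^2 + (X 1 0).im^2)
      ((X 0 1).re*(X 1 0).re + (X 0 1).im*(X 1 0).im)
      (‖((((p 0+p 1)/2)*((1-p 2)/2) : ℝ) : ℂ) * starRingEnd ℂ (X 1 0)
          - ((((p 0-p 1)/2)*((1+p 2)/2) : ℝ) : ℂ) * starRingEnd ℂ (X 0 1)‖)
      (‖((((p 0-p 1)/2)*((1+p 2)/2) : ℝ) : ℂ) * (X 1 0)
          - ((((p 0+p 1)/2)*((1-p 2)/2) : ℝ) : ℂ) * (X 0 1)‖)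
      hA hB hAB hS hT hK hg2 hnb hnc hrho
      (norm_nonneg _) (norm_nonneg _) hm2eq hn2eq
  refine psd2 _ (hermMain p X) ?_ ?_ ?_
  · rw [hre00]
    have h00a : (0:ℝ) ≤ ((1+p 2)/2)*((1-p 2)/2)
        *(((X 0 0).re - (X 1 1).re)^2 + ((X 0 0).im - (X 1 1).im)^2) := by positivity
    have h00b := r_nonneg ((1+p 2)/2 - ((p 0+p 1)/2)^2) ((1-p 2)/2 - ((p 0-p 1)/2)^2)
      (((p 0+p 1)/2)*((p 0-p 1)/2)) ((X 0 1).re^2 + (X 0 1).im^2)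
      ((X 1 0).re^2 + (X 1 0).im^2) ((X 0 1).re*(X 1 0).re + (X 0 1).im*(X 1 0).im)
      (by linarith) (by linarith) hw2 hnb hnc hrho
    linarith
  · rw [hre11]
    have h00a : (0:ℝ) ≤ ((1+p 2)/2)*((1-p 2)/2)
        *(((X 0 0).re - (X 1 1).re)^2 + ((X 0 0).im - (X 1 1).im)^2) := by positivity
    have h00b := r_nonneg ((1-p 2)/2 - ((p 0-p 1)/2)^2) ((1+p 2)/2 - ((p 0+p 1)/2)^2)
      (((p 0+p 1)/2)*((p 0-p 1)/2)) ((X 0 1).re^2 + (X 0 1).im^2)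
      ((X 1 0).re^2 + (X 1 0).im^2) ((X 0 1).re*(X 1 0).re + (X 0 1).im*(X 1 0).im)
      (by linarith) (by linarith) (by linarith [hw2]) hnb hnc hrho
    linarith
  · rw [hre00, hre11, hm01]
    have habs : ‖(X 0 0 - X 1 1)
          * (((((p 0+p 1)/2)*((1-p 2)/2) : ℝ) : ℂ) * starRingEnd ℂ (X 1 0)
            - ((((p 0-p 1)/2)*((1+p 2)/2) : ℝ) : ℂ) * starRingEnd ℂ (X 0 1))
        + starRingEnd ℂ (X 0 0 - X 1 1)
          * (((((p 0-p 1)/2)*((1+p 2)/2) : ℝ) : ℂ) * (X 1 0)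
            - ((((p 0+p 1)/2)*((1-p 2)/2) : ℝ) : ℂ) * (X 0 1))‖
        ≤ ‖X 0 0 - X 1 1‖
          * (‖((((p 0+p 1)/2)*((1-p 2)/2) : ℝ) : ℂ) * starRingEnd ℂ (X 1 0)
              - ((((p 0-p 1)/2)*((1+p 2)/2) : ℝ) : ℂ) * starRingEnd ℂ (X 0 1)‖
            + ‖((((p 0-p 1)/2)*((1+p 2)/2) : ℝ) : ℂ) * (X 1 0)
              - ((((p 0+p 1)/2)*((1-p 2)/2) : ℝ) : ℂ) * (X 0 1)‖) := by
      refine le_trans (norm_add_le _ _) ?_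
      rw [norm_mul, norm_mul, Complex.norm_conj, mul_add]
    have hgsq : (‖X 0 0 - X 1 1‖)^2
        = ((X 0 0).re - (X 1 1).re)^2 + ((X 0 0).im - (X 1 1).im)^2 := by
      rw [Complex.sq_norm]
      simp [Complex.normSq_apply, Complex.sub_re, Complex.sub_im]
      ring
    calc Complex.normSq ((X 0 0 - X 1 1)
          * (((((p 0+p 1)/2)*((1-p 2)/2) : ℝ) : ℂ) * starRingEnd ℂ (X 1 0)
            - ((((p 0-p 1)/2)*((1+p 2)/2) : ℝ) : ℂ) * starRingEnd ℂ (X 0 1))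
        + starRingEnd ℂ (X 0 0 - X 1 1)
          * (((((p 0-p 1)/2)*((1+p 2)/2) : ℝ) : ℂ) * (X 1 0)
            - ((((p 0+p 1)/2)*((1-p 2)/2) : ℝ) : ℂ) * (X 0 1)))
        = (‖(X 0 0 - X 1 1)
          * (((((p 0+p 1)/2)*((1-p 2)/2) : ℝ) : ℂ) * starRingEnd ℂ (X 1 0)
            - ((((p 0-p 1)/2)*((1+p 2)/2) : ℝ) : ℂ) * starRingEnd ℂ (X 0 1))
        + starRingEnd ℂ (X 0 0 - X 1 1)
          * (((((p 0-p 1)/2)*((1+p 2)/2) : ℝ) : ℂ) * (X 1 0)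
            - ((((p 0+p 1)/2)*((1-p 2)/2) : ℝ) : ℂ) * (X 0 1))‖)^2 := (Complex.sq_norm _).symm
      _ ≤ (‖X 0 0 - X 1 1‖
          * (‖((((p 0+p 1)/2)*((1-p 2)/2) : ℝ) : ℂ) * starRingEnd ℂ (X 1 0)
              - ((((p 0-p 1)/2)*((1+p 2)/2) : ℝ) : ℂ) * starRingEnd ℂ (X 0 1)‖
            + ‖((((p 0-p 1)/2)*((1+p 2)/2) : ℝ) : ℂ) * (X 1 0)
              - ((((p 0+p 1)/2)*((1-p 2)/2) : ℝ) : ℂ) * (X 0 1)‖))^2 :=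
        pow_le_pow_left₀ (norm_nonneg _) habs 2
      _ = (((X 0 0).re - (X 1 1).re)^2 + ((X 0 0).im - (X 1 1).im)^2)
          * (‖((((p 0+p 1)/2)*((1-p 2)/2) : ℝ) : ℂ) * starRingEnd ℂ (X 1 0)
              - ((((p 0-p 1)/2)*((1+p 2)/2) : ℝ) : ℂ) * starRingEnd ℂ (X 0 1)‖
            + ‖((((p 0-p 1)/2)*((1+p 2)/2) : ℝ) : ℂ) * (X 1 0)
              - ((((p 0+p 1)/2)*((1-p 2)/2) : ℝ) : ℂ) * (X 0 1)‖)^2 := by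
        rw [mul_pow, hgsq]
      _ ≤ _ := key
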